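/- Let G = F∞ ⋊_α ℤ, where F∞ is the free group on generators {g_i : i ∈ ℤ}, α is the ℤ-action generated by the shift automorphism φ(g_i) = g_{i+1}, and let H_n ⊆ F∞ ⊆ G be the subgroup generated by {g_i : i ≥ n}. Then the normalizer of H_n in G equals H_n. -/

import Mathlib

namespace NormalizerHnAux

open FreeGroup

/-- The "no cancellation" relation on letters. -/
def R : ℤ × Bool → ℤ × Bool → Prop := fun a b => ¬(a.1 = b.1 ∧ a.2 = !b.2)

instance : ∀ a b, Decidable (R a b) := fun _ _ => by unfold R; infer_instance

lemma reduce_eq_self : ∀ {L : List (ℤ × Bool)}, L.Chain' R → FreeGroup.reduce L = L := by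
  intro L
  induction L with
  | nil => intro _; rfl
  | cons x xs ih =>
    intro h
    rw [FreeGroup.reduce.cons, ih h.tail]
    cases xs with
    | nil => rfl
    | cons y ys =>
      have hr : R x y := (List.isChain_cons_cons.1 h).1
      show (if x.1 = y.1 ∧ x.2 = !y.2 then ys else x :: y :: ys) = x :: y :: ys
      rw [if_neg hr]

lemma exists_of_not_chain' {α : Type*} {S : α → α → Prop} :
    ∀ {L : List α}, ¬ L.Chain' S → ∃ l₁ a b l₂, L = l₁ ++ a :: b :: l₂ ∧ ¬ S a b := by
  intro L
  induction L with
  | nil => intro h; exact absurd List.isChain_nil h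
  | cons x xs ih =>
    intro h
    cases xs with
    | nil => exact absurd (List.isChain_singleton x) h
    | cons y ys =>
      unfold List.Chain' at h
      rw [List.isChain_cons_cons] at h
      by_cases hxy : S x y
      · have hc : ¬ (y :: ys).Chain' S := fun hc => h ⟨hxy, hc⟩
        obtain ⟨l₁, a, b, l₂, heq, hr⟩ := ih hc
        exact ⟨x :: l₁, a, b, l₂, by rw [List.cons_append, ← heq], hr⟩
      · exact ⟨[], x, y, ys, rfl, hxy⟩

lemma toWord_chain' (x : FreeGroup ℤ) : x.toWord.Chain' R := by
  by_contra h
  obtain ⟨l₁, a, b, l₂, heq, hr⟩ := exists_of_not_chain' h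
  rw [R, not_not] at hr
  have hb : b = (a.1, !a.2) := by
    obtain ⟨h1, h2⟩ := hr
    refine Prod.ext h1.symm ?_
    simp [h2]
  have : FreeGroup.reduce x.toWord = l₁ ++ (a.1, a.2) :: (a.1, !a.2) :: l₂ := by
    rw [FreeGroup.reduce_toWord, heq, hb]
  exact FreeGroup.reduce.not this

/-- The subgroup of words all of whose letters have index `≥ n`. -/
def K (n : ℤ) : Subgroup (FreeGroup ℤ) where
  carrier := {w | ∀ p ∈ w.toWord, n ≤ p.1}
  one_mem' := by simp [FreeGroup.toWord_one]
  mul_mem' := by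
    intro a b ha hb p hp
    have := (FreeGroup.toWord_mul_sublist a b).mem hp
    rcases List.mem_append.1 this with h | h
    · exact ha p h
    · exact hb p h
  inv_mem' := by
    intro a ha p hp
    rw [FreeGroup.toWord_inv, FreeGroup.invRev, List.mem_reverse, List.mem_map] at hp
    obtain ⟨q, hq, rfl⟩ := hp
    exact ha q hq

lemma mem_K {n : ℤ} {w : FreeGroup ℤ} : w ∈ K n ↔ ∀ p ∈ w.toWord, n ≤ p.1 := Iff.rfl

lemma closure_eq_K (n : ℤ) :
    Subgroup.closure {x : FreeGroup ℤ | ∃ i : ℤ, n ≤ i ∧ x = FreeGroup.of i} = K n := by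
  apply le_antisymm
  · rw [Subgroup.closure_le]
    rintro x ⟨i, hi, rfl⟩ p hp
    rw [FreeGroup.toWord_of, List.mem_singleton] at hp
    rw [hp]
    exact hi
  · intro w hw
    have key : ∀ L : List (ℤ × Bool), (∀ p ∈ L, n ≤ p.1) →
        FreeGroup.mk L ∈ Subgroup.closure {x : FreeGroup ℤ | ∃ i : ℤ, n ≤ i ∧ x = FreeGroup.of i} := by
      intro L
      induction L with
      | nil => intro _; rw [← FreeGroup.one_eq_mk]; exact Subgroup.one_mem _
      | cons p L ih =>
        intro hL
        have h1 : FreeGroup.mk (p :: L) = FreeGroup.mk [p] * FreeGroup.mk L := by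
          rw [FreeGroup.mul_mk]; rfl
        rw [h1]
        refine Subgroup.mul_mem _ ?_ (ih fun q hq => hL q (List.mem_cons_of_mem p hq))
        have hp : n ≤ p.1 := hL p List.mem_cons_self
        rcases p with ⟨i, b⟩
        cases b with
        | true => exact Subgroup.subset_closure ⟨i, hp, rfl⟩
        | false =>
          have : FreeGroup.mk [(i, false)] = (FreeGroup.of i)⁻¹ := by
            rw [show FreeGroup.of i = FreeGroup.mk [(i, true)] from rfl, FreeGroup.inv_mk]
            rfl
          rw [this]
          exact Subgroup.inv_mem _ (Subgroup.subset_closure ⟨i, hp, rfl⟩)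
    have h2 := key w.toWord hw
    rwa [FreeGroup.mk_toWord] at h2

lemma conj_word (w : FreeGroup ℤ) (i : ℤ) (hi : ∀ p ∈ w.toWord, p.1 ≠ i) :
    (w * FreeGroup.of i * w⁻¹).toWord = w.toWord ++ (i, true) :: FreeGroup.invRev w.toWord := by
  have h1 : w * FreeGroup.of i * w⁻¹
      = FreeGroup.mk (w.toWord ++ (i, true) :: FreeGroup.invRev w.toWord) := by
    conv_lhs => rw [← FreeGroup.mk_toWord (x := w)]
    rw [show FreeGroup.of i = FreeGroup.mk [(i, true)] from rfl, FreeGroup.inv_mk,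
      FreeGroup.mul_mk, FreeGroup.mul_mk, List.append_assoc]
    rfl
  have hinv : ∀ p ∈ FreeGroup.invRev w.toWord, p.1 ≠ i := by
    intro p hp
    rw [FreeGroup.invRev, List.mem_reverse, List.mem_map] at hp
    obtain ⟨q, hq, rfl⟩ := hp
    exact hi q hq
  have hc : (w.toWord ++ (i, true) :: FreeGroup.invRev w.toWord).Chain' R := by
    unfold List.Chain'
    rw [List.isChain_append]
    refine ⟨toWord_chain' w, ?_, ?_⟩
    · rw [List.isChain_cons]
      refine ⟨?_, by rw [← FreeGroup.toWord_inv]; exact toWord_chain' w⁻¹⟩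
      intro y hy
      have hy' : y ∈ FreeGroup.invRev w.toWord := List.mem_of_mem_head? hy
      exact fun hc => (hinv y hy') (hc.1.symm)
    · intro x hx y hy
      have hx' : x ∈ w.toWord := List.mem_of_mem_getLast? hx
      have : y = (i, true) := by
        simp only [List.head?_cons, Option.mem_def, Option.some.injEq] at hy
        exact hy.symm
      subst this
      exact fun hc => (hi x hx') hc.1
  rw [h1, FreeGroup.toWord_mk, reduce_eq_self hc]

lemma big_exists (L : List ℤ) (a b : ℤ) : ∃ i : ℤ, a ≤ i ∧ b ≤ i ∧ ∀ x ∈ L, x < i := by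
  induction L with
  | nil => exact ⟨max a b, le_max_left _ _, le_max_right _ _, by simp⟩
  | cons x xs ih =>
    obtain ⟨i, h1, h2, h3⟩ := ih
    refine ⟨max i (x + 1), h1.trans (le_max_left _ _), h2.trans (le_max_left _ _), ?_⟩
    intro y hy
    rcases List.mem_cons.1 hy with rfl | hy
    · exact lt_of_lt_of_le (by omega) (le_max_right _ _)
    · exact lt_of_lt_of_le (h3 y hy) (le_max_left _ _)

end NormalizerHnAux

open NormalizerHnAux

/-- Let `G = F∞ ⋊ ℤ`, where `ℤ` acts on the free group `F∞` on generators
`{gᵢ : i ∈ ℤ}` by powers of the shift `φ(gᵢ) = g_{i+1}`, and let `Hₙ = ⟨gᵢ : i ≥ n⟩`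
viewed as a subgroup of `G`.  Then the normalizer of `Hₙ` in `G` equals `Hₙ`. -/
theorem normalizer_Hn_in_semidirect_product_eq_Hn
    (β : Multiplicative ℤ →* MulAut (FreeGroup ℤ))
    (hβ : ∀ (n i : ℤ), β (Multiplicative.ofAdd n) (FreeGroup.of i) = FreeGroup.of (i + n))
    (n : ℤ) :
    Subgroup.normalizer (((Subgroup.closure {x : FreeGroup ℤ | ∃ i : ℤ, n ≤ i ∧ x = FreeGroup.of i}).map
        (SemidirectProduct.inl : FreeGroup ℤ →* FreeGroup ℤ ⋊[β] Multiplicative ℤ)) : Set (FreeGroup ℤ ⋊[β] Multiplicative ℤ)) =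
      (Subgroup.closure {x : FreeGroup ℤ | ∃ i : ℤ, n ≤ i ∧ x = FreeGroup.of i}).map
        (SemidirectProduct.inl : FreeGroup ℤ →* FreeGroup ℤ ⋊[β] Multiplicative ℤ) := by
  set H : ℤ → Subgroup (FreeGroup ℤ) :=
    fun m => Subgroup.closure {x : FreeGroup ℤ | ∃ i : ℤ, m ≤ i ∧ x = FreeGroup.of i} with hH
  apply le_antisymm
  swap
  · exact Subgroup.le_normalizer
  intro g hg
  rw [Subgroup.mem_normalizer_iff] at hg
  obtain ⟨w, k⟩ := g
  set d : ℤ := Multiplicative.toAdd k with hd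
  have hβk : ∀ i : ℤ, β k (FreeGroup.of i) = FreeGroup.of (i + d) := by
    intro i
    have h := hβ d i
    rwa [ofAdd_toAdd] at h
  have HK : ∀ m : ℤ, H m = K m := fun m => closure_eq_K m
  have memmap : ∀ z : FreeGroup ℤ,
      (SemidirectProduct.inl z : FreeGroup ℤ ⋊[β] Multiplicative ℤ) ∈
        (H n).map SemidirectProduct.inl ↔ z ∈ H n := by
    intro z
    constructor
    · rintro ⟨x, hx, he⟩
      cases SemidirectProduct.inl_injective he
      exact hx
    · intro hz; exact ⟨z, hz, rfl⟩
  have conj : ∀ y : FreeGroup ℤ,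
      ((⟨w, k⟩ : FreeGroup ℤ ⋊[β] Multiplicative ℤ) * SemidirectProduct.inl y *
        (⟨w, k⟩ : FreeGroup ℤ ⋊[β] Multiplicative ℤ)⁻¹)
        = SemidirectProduct.inl (w * β k y * w⁻¹) := by
    intro y
    ext
    · simp [MulAut.apply_inv_self, mul_assoc]
    · simp
  have cond : ∀ y : FreeGroup ℤ, y ∈ H n ↔ w * β k y * w⁻¹ ∈ H n := by
    intro y
    have h := hg (SemidirectProduct.inl y)
    rwa [conj y, memmap, memmap] at h
  have hmap : ∀ m : ℤ, Subgroup.map (β k).toMonoidHom (H m) = H (m + d) := by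
    intro m
    show Subgroup.map (β k).toMonoidHom (Subgroup.closure _) = Subgroup.closure _
    rw [MonoidHom.map_closure]
    congr 1
    ext x
    constructor
    · rintro ⟨-, ⟨i, hi, rfl⟩, rfl⟩
      exact ⟨i + d, by omega, by exact hβk i⟩
    · rintro ⟨j, hj, rfl⟩
      refine ⟨FreeGroup.of (j - d), ⟨j - d, by omega, rfl⟩, ?_⟩
      rw [show ((β k).toMonoidHom : FreeGroup ℤ → FreeGroup ℤ) (FreeGroup.of (j - d))
            = β k (FreeGroup.of (j - d)) from rfl, hβk]
      congr 1
      omega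
  have hshift : ∀ (y : FreeGroup ℤ) (m : ℤ), β k y ∈ H (m + d) ↔ y ∈ H m := by
    intro y m
    rw [← hmap m, Subgroup.mem_map_equiv]
    show (β k).symm (β k y) ∈ H m ↔ y ∈ H m
    rw [MulEquiv.symm_apply_apply]
  have cond2 : ∀ z : FreeGroup ℤ, z ∈ H (n + d) ↔ w * z * w⁻¹ ∈ H n := by
    intro z
    have h1 := cond ((β k)⁻¹ z)
    rw [MulAut.apply_inv_self] at h1
    rw [← h1]
    have h2 := hshift ((β k)⁻¹ z) n
    rw [MulAut.apply_inv_self] at h2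
    exact h2
  -- pick a large index i
  obtain ⟨i, hin, hind, hibig⟩ := big_exists (w.toWord.map Prod.fst) n (n + d)
  have hofi : FreeGroup.of i ∈ H (n + d) := Subgroup.subset_closure ⟨i, hind, rfl⟩
  have hconj : w * FreeGroup.of i * w⁻¹ ∈ H n := (cond2 _).1 hofi
  have hiw : ∀ p ∈ w.toWord, p.1 ≠ i := by
    intro p hp
    exact ne_of_lt (hibig p.1 (List.mem_map_of_mem (f := Prod.fst) hp))
  have hwK : w ∈ K n := by
    rw [HK] at hconj
    rw [mem_K] at hconj ⊢
    intro p hp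
    refine hconj p ?_
    rw [conj_word w i hiw]
    exact List.mem_append_left _ hp
  have hwH : w ∈ H n := by rw [HK]; exact hwK
  -- derive d = 0
  have hHH : ∀ z : FreeGroup ℤ, z ∈ H (n + d) ↔ z ∈ H n := by
    intro z
    rw [cond2 z]
    constructor
    · intro h
      have := Subgroup.mul_mem _ (Subgroup.mul_mem _ ((H n).inv_mem hwH) h) hwH
      group at this
      exact this
    · intro h
      exact Subgroup.mul_mem _ (Subgroup.mul_mem _ hwH h) ((H n).inv_mem hwH)
  have hd0 : d = 0 := by
    have h1 : FreeGroup.of n ∈ H n := Subgroup.subset_closure ⟨n, le_refl n, rfl⟩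
    have h2 : FreeGroup.of (n + d) ∈ H (n + d) := Subgroup.subset_closure ⟨n + d, le_refl _, rfl⟩
    have h3 := (hHH (FreeGroup.of n)).2 h1
    have h4 := (hHH (FreeGroup.of (n + d))).1 h2
    rw [HK, mem_K] at h3 h4
    have h5 : n + d ≤ n :=
      h3 (n, true) (by rw [FreeGroup.toWord_of]; exact List.mem_singleton_self _)
    have h6 : n ≤ n + d :=
      h4 (n + d, true) (by rw [FreeGroup.toWord_of]; exact List.mem_singleton_self _)
    omega
  have hk1 : k = 1 := by
    have h : Multiplicative.ofAdd (Multiplicative.toAdd k) = Multiplicative.ofAdd 0 := by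
      rw [← hd, hd0]
    rwa [ofAdd_toAdd] at h
  subst hk1
  exact ⟨w, hwH, rfl⟩
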